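/- arXiv:2003.09265 — 2 statements merged into one kernel-verified Lean document; each statement's English description precedes it below -/
import Mathlib

section
/- Let A = [G | t] be a finite camera with center c_A = (-G⁻¹t, 1) and principal ray n_A, let H ∈ GL₄(ℝ) have last row hᵀ, and set δ = det(H⁻¹). Then: (1) the camera AH⁻¹ is finite if and only if hᵀc_A ≠ 0, and in that case its center is c_{AH⁻¹} = (1/(hᵀc_A))·H·c_A; (2) if hᵀc_A ≠ 0, the principal ray of AH⁻¹ is n_{AH⁻¹} = δ·(hᵀc_A)·H⁻ᵀ·n_A; (3) if hᵀc_A ≠ 0, then for all q ∈ ℝ⁴ one has n_{AH⁻¹}ᵀ(Hq) = δ·(hᵀc_A)·(n_Aᵀq). -/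
open Matrix

noncomputable section

/-- Left 3x3 block `G` of a 3x4 camera matrix `A = [G | t]`. -/
def leftBlock (A : Matrix (Fin 3) (Fin 4) ℝ) : Matrix (Fin 3) (Fin 3) ℝ :=
  Matrix.of fun i j => A i j.castSucc

/-- Last column `t` of a 3x4 camera matrix `A = [G | t]`. -/
def tCol (A : Matrix (Fin 3) (Fin 4) ℝ) : Fin 3 → ℝ := fun i => A i 3

/-- A camera is finite if its left 3x3 block is invertible. -/
def FiniteCam (A : Matrix (Fin 3) (Fin 4) ℝ) : Prop := (leftBlock A).det ≠ 0

/-- The center `(-G⁻¹ t, 1)` of a finite camera. -/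
def camCenter (A : Matrix (Fin 3) (Fin 4) ℝ) : Fin 4 → ℝ :=
  Fin.snoc (-((leftBlock A)⁻¹ *ᵥ tCol A)) 1

/-- The principal ray `det G • (third row of A)`. -/
def principalRay (A : Matrix (Fin 3) (Fin 4) ℝ) : Fin 4 → ℝ :=
  (leftBlock A).det • A 2

/-- `n_∞ = (0,0,0,1)`. -/
def nInf : Fin 4 → ℝ := Fin.snoc (0 : Fin 3 → ℝ) 1

/-- The chiral domain `D_𝒜`: the closure, within `ℝ⁴ ∖ {0}` (i.e. ambient closure
intersected with `ℝ⁴ ∖ {0}`), of the set of finite vectors (last coordinate nonzero)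
having positive depth in every camera of the arrangement. -/
def chiralDomain {m : ℕ} (A : Fin m → Matrix (Fin 3) (Fin 4) ℝ) : Set (Fin 4 → ℝ) :=
  closure {q : Fin 4 → ℝ | nInf ⬝ᵥ q ≠ 0 ∧ ∀ i, 0 < (principalRay (A i) ⬝ᵥ q) * (nInf ⬝ᵥ q)}
    ∩ {q : Fin 4 → ℝ | q ≠ 0}

/-! ### Auxiliary lemmas -/

/-- The 4×4 matrix obtained by appending a fourth row `x` to a camera `A`. -/
def snocRows (A : Matrix (Fin 3) (Fin 4) ℝ) (x : Fin 4 → ℝ) : Matrix (Fin 4) (Fin 4) ℝ :=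
  Matrix.of (Fin.snoc (fun i => A i) x)

lemma last3 : (Fin.last 3) = (3 : Fin 4) := rfl

lemma snoc3 (p : Fin 3 → ℝ) (x : ℝ) : Fin.snoc (α := fun _ => ℝ) p x (3 : Fin 4) = x := rfl

lemma castAdd31 (i : Fin 3) : Fin.castAdd 1 i = i.castSucc := rfl

lemma natAdd31 (j : Fin 1) : Fin.natAdd 3 j = Fin.last 3 := by fin_cases j; rfl

lemma det_snocRows_eq (A : Matrix (Fin 3) (Fin 4) ℝ) (x : Fin 4 → ℝ) :
    (snocRows A x).det =
      (Matrix.fromBlocks (leftBlock A) (Matrix.of fun i (_ : Fin 1) => tCol A i)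
        (Matrix.of fun (_ : Fin 1) j => x (Fin.castSucc j))
        (Matrix.of fun (_ : Fin 1) (_ : Fin 1) => x (Fin.last 3))).det := by
  rw [← Matrix.det_submatrix_equiv_self (finSumFinEquiv (m := 3) (n := 1)) (snocRows A x)]
  congr 1
  ext i j
  rcases i with i | i <;> rcases j with j | j <;>
    simp only [Matrix.submatrix_apply, snocRows, Matrix.of_apply, Matrix.fromBlocks_apply₁₁,
      Matrix.fromBlocks_apply₁₂, Matrix.fromBlocks_apply₂₁, Matrix.fromBlocks_apply₂₂]
  · rw [finSumFinEquiv_apply_left, finSumFinEquiv_apply_left, castAdd31, castAdd31,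
      Fin.snoc_castSucc]
    rfl
  · rw [finSumFinEquiv_apply_left, finSumFinEquiv_apply_right, castAdd31, natAdd31,
      Fin.snoc_castSucc]
    rfl
  · rw [finSumFinEquiv_apply_right, finSumFinEquiv_apply_left, natAdd31, castAdd31,
      Fin.snoc_last]
  · rw [finSumFinEquiv_apply_right, finSumFinEquiv_apply_right, natAdd31, natAdd31,
      Fin.snoc_last]

lemma det_snocRows_nInf (B : Matrix (Fin 3) (Fin 4) ℝ) :
    (snocRows B nInf).det = (leftBlock B).det := by
  rw [det_snocRows_eq]
  have h0 : (Matrix.of fun (_ : Fin 1) j => nInf (Fin.castSucc j) : Matrix (Fin 1) (Fin 3) ℝ)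
      = 0 := by
    ext i j; simp [nInf, Fin.snoc_castSucc]
  rw [h0, Matrix.det_fromBlocks_zero₂₁]
  simp [nInf, Matrix.det_fin_one, Fin.snoc_last, snoc3]

lemma det_snocRows (A : Matrix (Fin 3) (Fin 4) ℝ) (hA : FiniteCam A) (x : Fin 4 → ℝ) :
    (snocRows A x).det = (leftBlock A).det * (camCenter A ⬝ᵥ x) := by
  have hu : IsUnit (leftBlock A).det := isUnit_iff_ne_zero.mpr hA
  have : Invertible (leftBlock A) := (leftBlock A).invertibleOfIsUnitDet hu
  rw [det_snocRows_eq, Matrix.det_fromBlocks₁₁]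
  congr 1
  rw [Matrix.det_fin_one, invOf_eq_nonsing_inv]
  have hC : ((Matrix.of fun (_ : Fin 1) j => x (Fin.castSucc j)) * (leftBlock A)⁻¹ *
        (Matrix.of fun i (_ : Fin 1) => tCol A i) : Matrix (Fin 1) (Fin 1) ℝ) 0 0
      = ∑ j : Fin 3, (∑ k : Fin 3, x (Fin.castSucc k) * (leftBlock A)⁻¹ k j) * tCol A j := by
    simp [Matrix.mul_apply]
  have hdot : camCenter A ⬝ᵥ x
      = (∑ k : Fin 3, -(((leftBlock A)⁻¹ *ᵥ tCol A) k) * x (Fin.castSucc k))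
          + x (Fin.last 3) := by
    rw [dotProduct, Fin.sum_univ_castSucc]
    simp [camCenter, Fin.snoc_castSucc, Fin.snoc_last, snoc3]
  have hswap : ∑ j : Fin 3, (∑ k : Fin 3, x (Fin.castSucc k) * (leftBlock A)⁻¹ k j) * tCol A j
      = ∑ k : Fin 3, (∑ j : Fin 3, (leftBlock A)⁻¹ k j * tCol A j) * x (Fin.castSucc k) := by
    simp only [Finset.sum_mul]
    rw [Finset.sum_comm]
    exact Finset.sum_congr rfl fun k _ => Finset.sum_congr rfl fun j _ => by ring
  rw [Matrix.sub_apply, hC, hdot, hswap]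
  have hmv : ∀ k, ((leftBlock A)⁻¹ *ᵥ tCol A) k = ∑ j : Fin 3, (leftBlock A)⁻¹ k j * tCol A j :=
    fun k => rfl
  simp only [hmv, neg_mul, Matrix.of_apply]
  rw [sub_eq_add_neg, ← Finset.sum_neg_distrib, add_comm]

lemma mulVec_camCenter (A : Matrix (Fin 3) (Fin 4) ℝ) (hA : FiniteCam A) :
    A *ᵥ camCenter A = 0 := by
  have hu : IsUnit (leftBlock A).det := isUnit_iff_ne_zero.mpr hA
  ext i
  have h1 : (A *ᵥ camCenter A) i
      = ∑ j : Fin 3, A i (Fin.castSucc j) * (-(((leftBlock A)⁻¹) *ᵥ tCol A)) j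
        + A i (Fin.last 3) * 1 := by
    have e : (A *ᵥ camCenter A) i = ∑ j : Fin 4, A i j * camCenter A j := rfl
    rw [e, Fin.sum_univ_castSucc]
    simp [camCenter, Fin.snoc_castSucc, Fin.snoc_last, snoc3]
  have h2 : ∑ j : Fin 3, A i (Fin.castSucc j) * (-(((leftBlock A)⁻¹) *ᵥ tCol A)) j
      = (leftBlock A *ᵥ (-((leftBlock A)⁻¹ *ᵥ tCol A))) i := rfl
  rw [h1, h2, Matrix.mulVec_neg, Matrix.mulVec_mulVec, Matrix.mul_nonsing_inv _ hu,
    Matrix.one_mulVec]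
  simp [tCol, last3]

lemma camCenter_unique (B : Matrix (Fin 3) (Fin 4) ℝ) (hB : FiniteCam B) (v : Fin 4 → ℝ)
    (h1 : B *ᵥ v = 0) (h2 : v 3 = 1) : v = camCenter B := by
  have hu : IsUnit (leftBlock B).det := isUnit_iff_ne_zero.mpr hB
  have key : leftBlock B *ᵥ Fin.init v = -(tCol B) := by
    ext i
    have h3 := congrFun h1 i
    have e : (B *ᵥ v) i = ∑ j : Fin 4, B i j * v j := rfl
    rw [e, Fin.sum_univ_castSucc, last3, h2] at h3
    have e1 : (leftBlock B *ᵥ Fin.init v) i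
        = ∑ j : Fin 3, B i (Fin.castSucc j) * v (Fin.castSucc j) := rfl
    have e2 : (-(tCol B)) i = -(B i 3) := rfl
    rw [e1, e2]
    simp only [Pi.zero_apply] at h3
    linarith
  have hinit : Fin.init v = -((leftBlock B)⁻¹ *ᵥ tCol B) := by
    have h4 := congrArg (fun w => (leftBlock B)⁻¹ *ᵥ w) key
    simpa [Matrix.mulVec_mulVec, Matrix.nonsing_inv_mul _ hu, Matrix.one_mulVec,
      Matrix.mulVec_neg] using h4
  calc v = Fin.snoc (Fin.init v) (v (Fin.last 3)) := (Fin.snoc_init_self v).symm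
    _ = camCenter B := by rw [hinit, last3, h2]; rfl

lemma snocRows_mul (A : Matrix (Fin 3) (Fin 4) ℝ) (H : Matrix (Fin 4) (Fin 4) ℝ)
    (hH : IsUnit H.det) :
    snocRows (A * H⁻¹) nInf = snocRows A (H 3) * H⁻¹ := by
  have h1 : H * H⁻¹ = 1 := Matrix.mul_nonsing_inv _ hH
  ext i j
  refine Fin.lastCases ?_ (fun i => ?_) i
  · simp only [snocRows, Matrix.of_apply, Fin.snoc_last, Matrix.mul_apply]
    have e : ∑ k, H 3 k * H⁻¹ k j = (1 : Matrix (Fin 4) (Fin 4) ℝ) 3 j := by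
      rw [← h1, Matrix.mul_apply]
    rw [e, Matrix.one_apply]
    refine Fin.lastCases ?_ (fun j => ?_) j
    · simp [nInf, ← last3, snoc3]
    · have hne : (3 : Fin 4) ≠ j.castSucc := by rw [← last3]; exact (Fin.castSucc_lt_last j).ne'
      simp [nInf, hne, Fin.snoc_castSucc]
  · simp only [snocRows, Matrix.of_apply, Fin.snoc_castSucc, Matrix.mul_apply]

lemma det_leftBlock_mul (A : Matrix (Fin 3) (Fin 4) ℝ) (hA : FiniteCam A)
    (H : Matrix (Fin 4) (Fin 4) ℝ) (hH : IsUnit H.det) :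
    (leftBlock (A * H⁻¹)).det
      = (leftBlock A).det * H⁻¹.det * (camCenter A ⬝ᵥ H 3) := by
  have h := det_snocRows_nInf (A * H⁻¹)
  rw [snocRows_mul A H hH, Matrix.det_mul, det_snocRows A hA (H 3)] at h
  rw [← h]; ring

/-- effect of a homography on a finite camera: with `h` the last row of
`H ∈ GL₄` and `δ = det(H⁻¹)`: (1) `AH⁻¹` is finite iff `hᵀc_A ≠ 0`, in which case its
center is `(1/(hᵀc_A)) • H c_A`; (2) its principal ray is `δ (hᵀc_A) • H⁻ᵀ n_A`;
(3) `n_{AH⁻¹}ᵀ(Hq) = δ (hᵀc_A) (n_Aᵀ q)` for all `q`. -/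
theorem camera_homography_transform
    (A : Matrix (Fin 3) (Fin 4) ℝ) (hA : FiniteCam A)
    (H : Matrix (Fin 4) (Fin 4) ℝ) (hH : IsUnit H.det) :
    (FiniteCam (A * H⁻¹) ↔ H 3 ⬝ᵥ camCenter A ≠ 0) ∧
    (H 3 ⬝ᵥ camCenter A ≠ 0 →
      camCenter (A * H⁻¹) = (H 3 ⬝ᵥ camCenter A)⁻¹ • (H *ᵥ camCenter A) ∧
      principalRay (A * H⁻¹)
        = (H⁻¹.det * (H 3 ⬝ᵥ camCenter A)) • ((H⁻¹).transpose *ᵥ principalRay A) ∧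
      ∀ q : Fin 4 → ℝ, principalRay (A * H⁻¹) ⬝ᵥ (H *ᵥ q)
        = H⁻¹.det * (H 3 ⬝ᵥ camCenter A) * (principalRay A ⬝ᵥ q)) := by
  have hcomm : camCenter A ⬝ᵥ H 3 = H 3 ⬝ᵥ camCenter A := dotProduct_comm _ _
  have hδ : H⁻¹.det ≠ 0 := by
    have h1 : H * H⁻¹ = 1 := Matrix.mul_nonsing_inv _ hH
    have h2 := congrArg Matrix.det h1
    rw [Matrix.det_mul, Matrix.det_one] at h2
    intro h0; rw [h0, mul_zero] at h2; exact one_ne_zero h2.symm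
  have hkey := det_leftBlock_mul A hA H hH
  have hHinvH : H⁻¹ * H = 1 := Matrix.nonsing_inv_mul _ hH
  constructor
  · rw [FiniteCam, hkey, hcomm]
    constructor
    · intro h hd; exact h (by rw [hd, mul_zero])
    · intro hd; exact mul_ne_zero (mul_ne_zero hA hδ) hd
  · intro hd
    have hfin : FiniteCam (A * H⁻¹) := by
      rw [FiniteCam, hkey, hcomm]; exact mul_ne_zero (mul_ne_zero hA hδ) hd
    have hrow2 : (A * H⁻¹) 2 = (H⁻¹)ᵀ *ᵥ A 2 := by
      ext j
      rw [Matrix.mul_apply]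
      have e : ((H⁻¹)ᵀ *ᵥ A 2) j = ∑ k, H⁻¹ k j * A 2 k := by
        simp [Matrix.mulVec, dotProduct, Matrix.transpose_apply]
      rw [e]
      exact Finset.sum_congr rfl fun k _ => mul_comm _ _
    have hpr : principalRay (A * H⁻¹)
        = (H⁻¹.det * (H 3 ⬝ᵥ camCenter A)) • ((H⁻¹).transpose *ᵥ principalRay A) := by
      rw [principalRay, principalRay, hkey, hcomm, hrow2, Matrix.mulVec_smul,
        smul_smul]
      congr 1
      ring
    refine ⟨?_, hpr, fun q => ?_⟩
    · symm
      apply camCenter_unique _ hfin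
      · rw [Matrix.mulVec_smul, Matrix.mulVec_mulVec, Matrix.mul_assoc A H⁻¹ H, hHinvH, Matrix.mul_one,
          mulVec_camCenter A hA, smul_zero]
      · have e : (H *ᵥ camCenter A) 3 = H 3 ⬝ᵥ camCenter A := rfl
        simp [e, inv_mul_cancel₀ hd]
    · rw [hpr, smul_dotProduct, smul_eq_mul]
      congr 1
      rw [Matrix.mulVec_transpose, Matrix.dotProduct_mulVec, Matrix.vecMul_vecMul,
        hHinvH, Matrix.vecMul_one]
end
end

section
/- Let A₁ = [G₁ | t₁] and A₂ = [G₂ | t₂] be finite cameras with distinct centers c₁, c₂. Fix q ∈ ℝ⁴ ∖ {0} not proportional to c₁ or c₂, and write A_i·q = λ_i·p_i with p_i ∈ ℝ³ ∖ {0}. Set a_i = G_i⁻¹p_i and b₁₂ = G₁⁻¹t₁ − G₂⁻¹t₂. Then the three vectors a₁, a₂, b₁₂ are collinear in ℝ³ (i.e., pairwise linearly dependent) if and only if q lies on the baseline, i.e., q is a linear combination of c₁ and c₂. In that case p₁ is proportional to the epipole e₁₂ = A₁c₂ and p₂ is proportional to the epipole e₂₁ = A₂c₁. -/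
open Matrix

noncomputable section

lemma snoc_smul' (c w : ℝ) (v : Fin 3 → ℝ) :
    c • (Fin.snoc v w : Fin 4 → ℝ) = Fin.snoc (c • v) (c * w) := by
  funext i
  refine Fin.lastCases ?_ (fun j => ?_) i <;> simp [-Fin.reduceLast]

lemma snoc_add' (v v' : Fin 3 → ℝ) (w w' : ℝ) :
    (Fin.snoc v w : Fin 4 → ℝ) + Fin.snoc v' w' = Fin.snoc (v + v') (w + w') := by
  funext i
  refine Fin.lastCases ?_ (fun j => ?_) i <;> simp [-Fin.reduceLast]

lemma snoc_congr' {v v' : Fin 3 → ℝ} {s s' : ℝ} (h1 : v = v') (h2 : s = s') :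
    (Fin.snoc v s : Fin 4 → ℝ) = Fin.snoc v' s' := by rw [h1, h2]

lemma snoc_inj' {v v' : Fin 3 → ℝ} {s s' : ℝ}
    (h : (Fin.snoc v s : Fin 4 → ℝ) = Fin.snoc v' s') : v = v' ∧ s = s' := by
  constructor
  · funext j; have := congrFun h j.castSucc; simpa using this
  · have := congrFun h (Fin.last 3); simpa [-Fin.reduceLast] using this

lemma mulVec_snoc' (A : Matrix (Fin 3) (Fin 4) ℝ) (v : Fin 3 → ℝ) (w : ℝ) :
    A *ᵥ (Fin.snoc v w : Fin 4 → ℝ) = leftBlock A *ᵥ v + w • tCol A := by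
  funext i
  simp only [Matrix.mulVec, dotProduct, Fin.sum_univ_castSucc, Fin.snoc_castSucc,
    Fin.snoc_last, Pi.add_apply, Pi.smul_apply, smul_eq_mul, leftBlock, tCol,
    Matrix.of_apply, -Fin.reduceLast]
  rw [show (Fin.last 3 : Fin 4) = 3 from rfl]
  ring

lemma cross_eq_zero_iff' (v b : Fin 3 → ℝ) (hb : b ≠ 0) :
    v ⨯₃ b = 0 ↔ ∃ s : ℝ, v = s • b := by
  constructor
  · intro h
    have h0 := congrFun h 0
    have h1 := congrFun h 1
    have h2 := congrFun h 2
    simp [cross_apply, sub_eq_zero] at h0 h1 h2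
    have hcase : b 0 ≠ 0 ∨ b 1 ≠ 0 ∨ b 2 ≠ 0 := by
      by_contra hc
      push_neg at hc
      refine hb (funext fun i => ?_)
      fin_cases i
      · exact hc.1
      · exact hc.2.1
      · exact hc.2.2
    rcases hcase with hj | hj | hj
    · refine ⟨v 0 / b 0, funext fun i => ?_⟩
      fin_cases i
      · show v 0 = v 0 / b 0 * b 0; field_simp
      · show v 1 = v 0 / b 0 * b 1
        rw [div_mul_eq_mul_div, eq_div_iff hj]; linarith
      · show v 2 = v 0 / b 0 * b 2
        rw [div_mul_eq_mul_div, eq_div_iff hj]; linarith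
    · refine ⟨v 1 / b 1, funext fun i => ?_⟩
      fin_cases i
      · show v 0 = v 1 / b 1 * b 0
        rw [div_mul_eq_mul_div, eq_div_iff hj]; linarith
      · show v 1 = v 1 / b 1 * b 1; field_simp
      · show v 2 = v 1 / b 1 * b 2
        rw [div_mul_eq_mul_div, eq_div_iff hj]; linarith
    · refine ⟨v 2 / b 2, funext fun i => ?_⟩
      fin_cases i
      · show v 0 = v 2 / b 2 * b 0
        rw [div_mul_eq_mul_div, eq_div_iff hj]; linarith
      · show v 1 = v 2 / b 2 * b 1
        rw [div_mul_eq_mul_div, eq_div_iff hj]; linarith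
      · show v 2 = v 2 / b 2 * b 2; field_simp
  · rintro ⟨s, rfl⟩
    rw [_root_.map_smul, LinearMap.smul_apply, cross_self, smul_zero]

/-- for two finite cameras with distinct centers and `q` not proportional to
either center, writing `A_i q = λ_i p_i` with `p_i ≠ 0`, `a_i = G_i⁻¹ p_i` and
`b₁₂ = G₁⁻¹t₁ − G₂⁻¹t₂`, the vectors `a₁, a₂, b₁₂` are pairwise linearly dependent
(equivalently, their pairwise cross products vanish) iff `q` lies on the baseline; in that
case `p₁` is proportional to the epipole `e₁₂ = A₁c₂` and `p₂` to `e₂₁ = A₂c₁`. -/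
theorem collinear_iff_on_baseline
    (A₁ A₂ : Matrix (Fin 3) (Fin 4) ℝ)
    (h₁ : FiniteCam A₁) (h₂ : FiniteCam A₂)
    (hdist : camCenter A₁ ≠ camCenter A₂)
    (q : Fin 4 → ℝ) (hq : q ≠ 0)
    (hqc₁ : ¬ ∃ c : ℝ, q = c • camCenter A₁)
    (hqc₂ : ¬ ∃ c : ℝ, q = c • camCenter A₂)
    (lam₁ lam₂ : ℝ) (p₁ p₂ : Fin 3 → ℝ) (hp₁ : p₁ ≠ 0) (hp₂ : p₂ ≠ 0)
    (him₁ : A₁ *ᵥ q = lam₁ • p₁) (him₂ : A₂ *ᵥ q = lam₂ • p₂) :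
    ((((leftBlock A₁)⁻¹ *ᵥ p₁) ⨯₃ ((leftBlock A₂)⁻¹ *ᵥ p₂) = 0 ∧
      (((leftBlock A₁)⁻¹ *ᵥ p₁) ⨯₃
        ((leftBlock A₁)⁻¹ *ᵥ tCol A₁ - (leftBlock A₂)⁻¹ *ᵥ tCol A₂) = 0) ∧
      (((leftBlock A₂)⁻¹ *ᵥ p₂) ⨯₃
        ((leftBlock A₁)⁻¹ *ᵥ tCol A₁ - (leftBlock A₂)⁻¹ *ᵥ tCol A₂) = 0)) ↔
      ∃ α β : ℝ, q = α • camCenter A₁ + β • camCenter A₂) ∧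
    ((∃ α β : ℝ, q = α • camCenter A₁ + β • camCenter A₂) →
      (∃ c : ℝ, c ≠ 0 ∧ p₁ = c • (A₁ *ᵥ camCenter A₂)) ∧
      (∃ c : ℝ, c ≠ 0 ∧ p₂ = c • (A₂ *ᵥ camCenter A₁))) := by
  set G₁ := leftBlock A₁ with hG₁def
  set G₂ := leftBlock A₂ with hG₂def
  have hu₁ : IsUnit G₁.det := Ne.isUnit h₁
  have hu₂ : IsUnit G₂.det := Ne.isUnit h₂
  have cancel₁ : ∀ v : Fin 3 → ℝ, G₁⁻¹ *ᵥ (G₁ *ᵥ v) = v := fun v => by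
    rw [Matrix.mulVec_mulVec, Matrix.nonsing_inv_mul _ hu₁, Matrix.one_mulVec]
  have cancel₂ : ∀ v : Fin 3 → ℝ, G₂⁻¹ *ᵥ (G₂ *ᵥ v) = v := fun v => by
    rw [Matrix.mulVec_mulVec, Matrix.nonsing_inv_mul _ hu₂, Matrix.one_mulVec]
  have cancel₁' : ∀ v : Fin 3 → ℝ, G₁ *ᵥ (G₁⁻¹ *ᵥ v) = v := fun v => by
    rw [Matrix.mulVec_mulVec, Matrix.mul_nonsing_inv _ hu₁, Matrix.one_mulVec]
  have cancel₂' : ∀ v : Fin 3 → ℝ, G₂ *ᵥ (G₂⁻¹ *ᵥ v) = v := fun v => by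
    rw [Matrix.mulVec_mulVec, Matrix.mul_nonsing_inv _ hu₂, Matrix.one_mulVec]
  set u₁ : Fin 3 → ℝ := G₁⁻¹ *ᵥ tCol A₁ with hu₁def
  set u₂ : Fin 3 → ℝ := G₂⁻¹ *ᵥ tCol A₂ with hu₂def
  set a₁ : Fin 3 → ℝ := G₁⁻¹ *ᵥ p₁ with ha₁def
  set a₂ : Fin 3 → ℝ := G₂⁻¹ *ᵥ p₂ with ha₂def
  set b : Fin 3 → ℝ := u₁ - u₂ with hbdef
  set x : Fin 3 → ℝ := Fin.init q with hxdef
  set w : ℝ := q (Fin.last 3) with hwdef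
  have hqsnoc : q = Fin.snoc x w := (Fin.snoc_init_self q).symm
  have hc₁ : camCenter A₁ = Fin.snoc (-u₁) 1 := rfl
  have hc₂ : camCenter A₂ = Fin.snoc (-u₂) 1 := rfl
  have key₁ : lam₁ • a₁ = x + w • u₁ := by
    have h : G₁ *ᵥ x + w • tCol A₁ = lam₁ • p₁ := by
      rw [← mulVec_snoc', ← hqsnoc]; exact him₁
    calc lam₁ • a₁ = G₁⁻¹ *ᵥ (lam₁ • p₁) := by rw [Matrix.mulVec_smul]
      _ = G₁⁻¹ *ᵥ (G₁ *ᵥ x + w • tCol A₁) := by rw [h]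
      _ = x + w • u₁ := by rw [Matrix.mulVec_add, Matrix.mulVec_smul, cancel₁]
  have key₂ : lam₂ • a₂ = x + w • u₂ := by
    have h : G₂ *ᵥ x + w • tCol A₂ = lam₂ • p₂ := by
      rw [← mulVec_snoc', ← hqsnoc]; exact him₂
    calc lam₂ • a₂ = G₂⁻¹ *ᵥ (lam₂ • p₂) := by rw [Matrix.mulVec_smul]
      _ = G₂⁻¹ *ᵥ (G₂ *ᵥ x + w • tCol A₂) := by rw [h]
      _ = x + w • u₂ := by rw [Matrix.mulVec_add, Matrix.mulVec_smul, cancel₂]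
  have hb : b ≠ 0 := by
    intro h
    apply hdist
    rw [hc₁, hc₂, sub_eq_zero.mp h]
  have hlam₁ : lam₁ ≠ 0 := by
    intro h
    apply hqc₁
    refine ⟨w, ?_⟩
    have hx : x = w • (-u₁) := by
      have h' := key₁
      rw [h, zero_smul] at h'
      rw [smul_neg, eq_neg_iff_add_eq_zero, ← h']
    rw [hqsnoc, hc₁, snoc_smul']
    exact snoc_congr' hx (mul_one w).symm
  have hlam₂ : lam₂ ≠ 0 := by
    intro h
    apply hqc₂
    refine ⟨w, ?_⟩
    have hx : x = w • (-u₂) := by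
      have h' := key₂
      rw [h, zero_smul] at h'
      rw [smul_neg, eq_neg_iff_add_eq_zero, ← h']
    rw [hqsnoc, hc₂, snoc_smul']
    exact snoc_congr' hx (mul_one w).symm
  have hcomb : ∀ α β : ℝ, α • camCenter A₁ + β • camCenter A₂ =
      Fin.snoc (α • (-u₁) + β • (-u₂)) (α + β) := by
    intro α β
    rw [hc₁, hc₂, snoc_smul', snoc_smul', snoc_add', mul_one, mul_one]
  constructor
  · constructor
    · rintro ⟨h12, h1b, h2b⟩
      obtain ⟨s, hs⟩ := (cross_eq_zero_iff' a₁ b hb).mp h1b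
      refine ⟨w - lam₁ * s, lam₁ * s, ?_⟩
      rw [hcomb, hqsnoc]
      refine snoc_congr' ?_ (by ring)
      have hx : x = lam₁ • a₁ - w • u₁ := by rw [key₁]; abel
      rw [hx, hs, hbdef]
      module
    · rintro ⟨α, β, hαβ⟩
      rw [hcomb, hqsnoc] at hαβ
      obtain ⟨hx, hw⟩ := snoc_inj' hαβ
      have ha1 : lam₁ • a₁ = β • b := by
        rw [key₁, hx, hw, hbdef]; module
      have ha2 : lam₂ • a₂ = (-α) • b := by
        rw [key₂, hx, hw, hbdef]; module
      have ea1 : a₁ = (lam₁⁻¹ * β) • b := by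
        rw [← smul_smul, ← ha1, smul_smul, inv_mul_cancel₀ hlam₁, one_smul]
      have ea2 : a₂ = (lam₂⁻¹ * (-α)) • b := by
        rw [← smul_smul, ← ha2, smul_smul, inv_mul_cancel₀ hlam₂, one_smul]
      refine ⟨?_, ?_, ?_⟩ <;>
        simp [ea1, ea2, _root_.map_smul, LinearMap.smul_apply, cross_self,
          LinearMap.map_smul, smul_zero]
  · rintro ⟨α, β, hαβ⟩
    have hA₁c₁ : A₁ *ᵥ camCenter A₁ = 0 := by
      rw [hc₁, mulVec_snoc', ← hG₁def, Matrix.mulVec_neg, hu₁def, cancel₁', one_smul,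
        neg_add_cancel]
    have hA₂c₂ : A₂ *ᵥ camCenter A₂ = 0 := by
      rw [hc₂, mulVec_snoc', ← hG₂def, Matrix.mulVec_neg, hu₂def, cancel₂', one_smul,
        neg_add_cancel]
    have hβ : β ≠ 0 := by
      intro h
      exact hqc₁ ⟨α, by rw [hαβ, h, zero_smul, add_zero]⟩
    have hα : α ≠ 0 := by
      intro h
      exact hqc₂ ⟨β, by rw [hαβ, h, zero_smul, zero_add]⟩
    have h1 : lam₁ • p₁ = β • (A₁ *ᵥ camCenter A₂) := by
      rw [← him₁, hαβ, Matrix.mulVec_add, Matrix.mulVec_smul, Matrix.mulVec_smul,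
        hA₁c₁, smul_zero, zero_add]
    have h2 : lam₂ • p₂ = α • (A₂ *ᵥ camCenter A₁) := by
      rw [← him₂, hαβ, Matrix.mulVec_add, Matrix.mulVec_smul, Matrix.mulVec_smul,
        hA₂c₂, smul_zero, add_zero]
    refine ⟨⟨lam₁⁻¹ * β, mul_ne_zero (inv_ne_zero hlam₁) hβ, ?_⟩,
      ⟨lam₂⁻¹ * α, mul_ne_zero (inv_ne_zero hlam₂) hα, ?_⟩⟩
    · rw [← smul_smul, ← h1, smul_smul, inv_mul_cancel₀ hlam₁, one_smul]
    · rw [← smul_smul, ← h2, smul_smul, inv_mul_cancel₀ hlam₂, one_smul]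
end
end
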